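/- arXiv:0912.0300 — 3 statements merged into one kernel-verified Lean document; each statement's English description precedes it below -/
import Mathlib

section
/- Let ω be a normalized 3-cocycle on a finite group Ḡ with values in ℂ*, and define θ_g(x,y) = ω(g,x,y)ω(x,y,g^{xy})/ω(x,g,y^g) for g,x,y ∈ Ḡ. Then for each fixed g ∈ Ḡ, the restriction of θ_g to the centralizer C_{Ḡ}(g) is a 2-cocycle on C_{Ḡ}(g) with values in ℂ*. -/
/-- The right conjugate `a^b = b⁻¹ * a * b`. -/
def conjR {H : Type*} [Group H] (a b : H) : H := b⁻¹ * a * b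

/-- The 2-cochain `θ_g` associated to a 3-cocycle `ω`. -/
def thetaCochain {H : Type*} [Group H] (ω : H → H → H → ℂˣ) (g x y : H) : ℂˣ :=
  ω g x y * ω x y (conjR g (x * y)) * (ω x g (conjR y g))⁻¹

lemma conjR_of_comm {H : Type*} [Group H] {g x : H} (h : g * x = x * g) :
    conjR g x = g := by
  unfold conjR
  rw [mul_assoc, h, ← mul_assoc, inv_mul_cancel, one_mul]

lemma conjR_of_comm' {H : Type*} [Group H] {g x : H} (h : g * x = x * g) :
    conjR x g = x := by
  unfold conjR
  rw [mul_assoc, ← h, ← mul_assoc, inv_mul_cancel, one_mul]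

/-- if `ω` is a normalized 3-cocycle on a finite group `Ḡ` valued in `ℂ*`,
then for each `g`, the restriction of `θ_g` to the centralizer `C_Ḡ(g)` is a
(normalized) 2-cocycle valued in `ℂ*`. -/
theorem theta_is_two_cocycle_on_centralizer (Gbar : Type*) [Group Gbar] [Fintype Gbar]
    (ω : Gbar → Gbar → Gbar → ℂˣ)
    (hcoc : ∀ a b c d : Gbar,
      ω a b c * ω a (b * c) d * ω b c d = ω (a * b) c d * ω a b (c * d))
    (hnorm : ∀ a b : Gbar, ω 1 a b = 1 ∧ ω a 1 b = 1 ∧ ω a b 1 = 1)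
    (g : Gbar) :
    (∀ x y z : Gbar, x ∈ Subgroup.centralizer {g} → y ∈ Subgroup.centralizer {g} →
        z ∈ Subgroup.centralizer {g} →
      thetaCochain ω g x y * thetaCochain ω g (x * y) z
        = thetaCochain ω g y z * thetaCochain ω g x (y * z)) ∧
    (∀ x : Gbar, x ∈ Subgroup.centralizer {g} →
      thetaCochain ω g 1 x = 1 ∧ thetaCochain ω g x 1 = 1) := by
  constructor
  · intro x y z hx hy hz
    have hgx : g * x = x * g := Subgroup.mem_centralizer_iff.mp hx g rfl
    have hgy : g * y = y * g := Subgroup.mem_centralizer_iff.mp hy g rfl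
    have hgz : g * z = z * g := Subgroup.mem_centralizer_iff.mp hz g rfl
    have hgxy : g * (x * y) = (x * y) * g := by
      rw [← mul_assoc, hgx, mul_assoc, hgy, mul_assoc]
    have hgyz : g * (y * z) = (y * z) * g := by
      rw [← mul_assoc, hgy, mul_assoc, hgz, mul_assoc]
    have hgxyz : g * ((x * y) * z) = ((x * y) * z) * g := by
      rw [← mul_assoc g, hgxy, mul_assoc (x * y), hgz, ← mul_assoc]
    have hgxyz2 : g * (x * (y * z)) = (x * (y * z)) * g := by
      rw [← mul_assoc x y z]; exact hgxyz
    simp only [thetaCochain, conjR_of_comm hgxy, conjR_of_comm hgyz,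
      conjR_of_comm hgxyz, conjR_of_comm hgxyz2, conjR_of_comm' hgy, conjR_of_comm' hgz,
      conjR_of_comm' hgyz]
    -- pass to ℂ
    have hA := hcoc g x y z
    rw [hgx] at hA
    have hB := hcoc x g y z
    rw [hgy] at hB
    have hC := hcoc x y g z
    rw [hgz] at hC
    have hD := hcoc x y z g
    have hA' := congrArg Units.val hA
    have hB' := congrArg Units.val hB
    have hC' := congrArg Units.val hC
    have hD' := congrArg Units.val hD
    simp only [Units.val_mul] at hA' hB' hC' hD'
    -- the key cancellation element
    have hE : (↑(ω x y z) * ↑(ω x (y * g) z) * ↑(ω (x * g) y z) * ↑(ω x y (z * g)) : ℂ) ≠ 0 :=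
      mul_ne_zero (mul_ne_zero (mul_ne_zero (Units.ne_zero _) (Units.ne_zero _))
        (Units.ne_zero _)) (Units.ne_zero _)
    have key : ((↑(ω g x y) * ↑(ω x y g) * ↑(ω g (x * y) z) * ↑(ω (x * y) z g)
          * ↑(ω y g z) * ↑(ω x g (y * z))) : ℂ)
          * (↑(ω x y z) * ↑(ω x (y * g) z) * ↑(ω (x * g) y z) * ↑(ω x y (z * g)))
        = ((↑(ω g y z) * ↑(ω y z g) * ↑(ω g x (y * z)) * ↑(ω x (y * z) g)
          * ↑(ω x g y) * ↑(ω (x * y) g z)) : ℂ)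
          * (↑(ω x y z) * ↑(ω x (y * g) z) * ↑(ω (x * g) y z) * ↑(ω x y (z * g))) := by
      linear_combination
        (↑(ω x y g) * ↑(ω x (y * g) z) * ↑(ω y g z)
          * ↑(ω (x * g) y z) * ↑(ω x g (y * z))
          * ↑(ω (x * y) z g) * ↑(ω x y (z * g)) : ℂ) * hA'
        + ((↑(ω (x * g) y z) * ↑(ω g x (y * z)) : ℂ)
          * (↑(ω (x * g) y z) * ↑(ω x g (y * z)))
          * (↑(ω (x * y) z g) * ↑(ω x y (z * g)))) * hC'
        - ((↑(ω (x * g) y z) * ↑(ω g x (y * z)) : ℂ)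
          * (↑(ω (x * y) g z) * ↑(ω x y (z * g)))
          * (↑(ω (x * y) z g) * ↑(ω x y (z * g)))) * hB'
        - ((↑(ω (x * g) y z) * ↑(ω g x (y * z)) : ℂ)
          * (↑(ω (x * y) g z) * ↑(ω x y (z * g)))
          * (↑(ω x g y) * ↑(ω x (y * g) z) * ↑(ω g y z))) * hD'
    have star := mul_right_cancel₀ hE key
    refine Units.ext ?_
    have h1 : ((ω x g y : ℂˣ) : ℂ) ≠ 0 := Units.ne_zero _
    have h2 : ((ω (x * y) g z : ℂˣ) : ℂ) ≠ 0 := Units.ne_zero _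
    have h3 : ((ω y g z : ℂˣ) : ℂ) ≠ 0 := Units.ne_zero _
    have h4 : ((ω x g (y * z) : ℂˣ) : ℂ) ≠ 0 := Units.ne_zero _
    simp only [Units.val_mul, Units.val_inv_eq_inv_val]
    field_simp
    linear_combination star
  · intro x hx
    have hgx : g * x = x * g := Subgroup.mem_centralizer_iff.mp hx g rfl
    have n1 : ∀ a b : Gbar, ω 1 a b = 1 := fun a b => (hnorm a b).1
    have n2 : ∀ a b : Gbar, ω a 1 b = 1 := fun a b => (hnorm a b).2.1
    have n3 : ∀ a b : Gbar, ω a b 1 = 1 := fun a b => (hnorm a b).2.2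
    have h1 : conjR (1 : Gbar) g = 1 := by simp [conjR]
    constructor
    · simp [thetaCochain, n1, n2, n3, h1]
    · simp [thetaCochain, n1, n2, n3, h1]
end

section
/- With D = D^{ω'}(G) the twisted quantum double of G (with ω' inflated from a 3-cocycle ω on Ḡ = G/N), the linear map φ : D^ω(G,N) → D defined by φ(e(ḡ)⊗x) = Σ_{n∈N} e(gn)⊗x is an injective algebra homomorphism. -/
variable {G : Type*} [Group G] [Fintype G] [DecidableEq G]
  (N : Subgroup G) [N.Normal]

/-- The product of the generalized twisted quantum double `D^ω(G,N)` on coordinate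
functions with respect to the basis `{e(ḡ) ⊗ x}`:
`(e(ḡ)⊗x)(e(h̄)⊗y) = δ_{ḡ^x,h̄} θ_ḡ(x̄,ȳ) e(ḡ)⊗xy`. -/
noncomputable def gtqdMul (ω : G ⧸ N → G ⧸ N → G ⧸ N → ℂˣ)
    (f h : (G ⧸ N) × G → ℂ) : (G ⧸ N) × G → ℂ :=
  fun p => ∑ x : G,
    f (p.1, x) * (thetaCochain ω p.1 (x : G ⧸ N) ((x⁻¹ * p.2 : G) : G ⧸ N) : ℂ)
      * h (conjR p.1 (x : G ⧸ N), x⁻¹ * p.2)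

/-- The product of the twisted quantum double `D^{ω'}(G)` where `ω'` is the inflation
to `G` of the 3-cocycle `ω` on `G/N` (so `θ'_g(x,y) = θ_ḡ(x̄,ȳ)`), on coordinate
functions with respect to the basis `{e(g) ⊗ x}`. -/
noncomputable def tqdInflMul (ω : G ⧸ N → G ⧸ N → G ⧸ N → ℂˣ)
    (f h : G × G → ℂ) : G × G → ℂ :=
  fun p => ∑ x : G,
    f (p.1, x) * (thetaCochain ω (p.1 : G ⧸ N) (x : G ⧸ N) ((x⁻¹ * p.2 : G) : G ⧸ N) : ℂ)
      * h (conjR p.1 x, x⁻¹ * p.2)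

/-- The map `φ : D^ω(G,N) → D^{ω'}(G)`, `e(ḡ)⊗x ↦ Σ_{n∈N} e(gn)⊗x`, on coordinate
functions. -/
def gtqdToTqd (f : (G ⧸ N) × G → ℂ) : G × G → ℂ :=
  fun p => f ((p.1 : G ⧸ N), p.2)

/-- `φ : D^ω(G,N) → D^{ω'}(G)`, `e(ḡ)⊗x ↦ Σ_{n∈N} e(gn)⊗x`, is an
injective algebra homomorphism. -/
theorem gtqdToTqd_injective_algHom (ω : G ⧸ N → G ⧸ N → G ⧸ N → ℂˣ)
    (hcoc : ∀ a b c d : G ⧸ N,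
      ω a b c * ω a (b * c) d * ω b c d = ω (a * b) c d * ω a b (c * d))
    (hnorm : ∀ a b : G ⧸ N, ω 1 a b = 1 ∧ ω a 1 b = 1 ∧ ω a b 1 = 1) :
    Function.Injective (gtqdToTqd N) ∧
    (∀ f h : (G ⧸ N) × G → ℂ,
      gtqdToTqd N (gtqdMul N ω f h) = tqdInflMul N ω (gtqdToTqd N f) (gtqdToTqd N h)) ∧
    (∀ f h : (G ⧸ N) × G → ℂ, gtqdToTqd N (f + h) = gtqdToTqd N f + gtqdToTqd N h) ∧
    (∀ (c : ℂ) (f : (G ⧸ N) × G → ℂ), gtqdToTqd N (c • f) = c • gtqdToTqd N f) ∧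
    gtqdToTqd N (fun p => if p.2 = 1 then (1 : ℂ) else 0)
      = fun p : G × G => if p.2 = 1 then (1 : ℂ) else 0 := by
  refine ⟨?_, ?_, fun f h => rfl, fun c f => rfl, rfl⟩
  · intro f h hfh
    funext p
    obtain ⟨p1, p2⟩ := p
    obtain ⟨g, rfl⟩ := QuotientGroup.mk_surjective p1
    exact congrFun hfh (g, p2)
  · intro f h
    funext p
    simp only [gtqdToTqd, gtqdMul, tqdInflMul]
    refine Finset.sum_congr rfl fun x _ => ?_
    have : ((conjR p.1 x : G) : G ⧸ N) = conjR (↑p.1) (↑x) := by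
      simp [conjR]
    rw [this]
end

section
/- Let G be a finite group, f, g ∈ G, and let U be an irreducible representation of C_G(f) and V an irreducible representation of C_G(g), with induced G-class functions χ̂_U and χ̂_V supported on pairs (h,x) where h is conjugate to f (resp. g) and x centralizes h. If f and g are not conjugate in G, then the inner product ⟨χ̂_U, χ̂_V⟩ := (1/|G|) Σ_{k∈G} Σ_{x∈G} [k = wfw⁻¹][k = ygy⁻¹][x ∈ wC_G(f)w⁻¹ ∩ yC_G(g)y⁻¹] χ_U(w⁻¹xw)\overline{χ_V(y⁻¹xy)} is zero; if f = g, it equals ⟨χ_U, χ_V⟩_{C_G(f)} = δ_{U,V}. -/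
attribute [local instance] Classical.propDecidable

open CategoryTheory


open Matrix ComplexOrder in
set_option maxHeartbeats 1000000 in
lemma matrix_conj_trace {n : Type*} [Fintype n] [DecidableEq n]
    (A B : Matrix n n ℂ) (k : ℕ) (hk : k ≠ 0) (hA : A ^ k = 1) (hAB : A * B = 1) :
    B.trace = (starRingEnd ℂ) A.trace := by
  obtain ⟨m, rfl⟩ := Nat.exists_eq_succ_of_ne_zero hk
  have hA' : A ^ (m + 1) = 1 := hA
  set P : Matrix n n ℂ := ∑ j ∈ Finset.range (m + 1), (A ^ j)ᴴ * A ^ j with hP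
  have hPd : P.PosDef := by
    rw [hP, Finset.sum_range_succ']
    refine Matrix.PosDef.posSemidef_add ?_ (by simpa using Matrix.PosDef.one)
    exact Finset.sum_induction _ _ (fun a b ha hb => ha.add hb) Matrix.PosSemidef.zero
      (fun i _ => posSemidef_conjTranspose_mul_self _)
  have key : Aᴴ * P * A = P := by
    rw [hP, Finset.mul_sum, Finset.sum_mul]
    have e1 : ∀ j, Aᴴ * ((A ^ j)ᴴ * A ^ j) * A = (A ^ (j + 1))ᴴ * A ^ (j + 1) := by
      intro j
      rw [pow_succ, conjTranspose_mul]
      noncomm_ring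
    calc ∑ j ∈ Finset.range (m + 1), Aᴴ * ((A ^ j)ᴴ * A ^ j) * A
        = ∑ j ∈ Finset.range (m + 1), (A ^ (j + 1))ᴴ * A ^ (j + 1) := by
          exact Finset.sum_congr rfl fun j _ => e1 j
      _ = ∑ j ∈ Finset.range m, (A ^ (j + 1))ᴴ * A ^ (j + 1) + (A ^ (m + 1))ᴴ * A ^ (m + 1) :=
          Finset.sum_range_succ _ _
      _ = ∑ j ∈ Finset.range m, (A ^ (j + 1))ᴴ * A ^ (j + 1) + (A ^ 0)ᴴ * A ^ 0 := by
          rw [hA']; simp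
      _ = ∑ j ∈ Finset.range (m + 1), (A ^ j)ᴴ * A ^ j :=
          (Finset.sum_range_succ' (fun j => (A ^ j)ᴴ * A ^ j) m).symm
  obtain ⟨iP⟩ := hPd.isUnit.nonempty_invertible
  have h1 : P * B = Aᴴ * P := by
    calc P * B = Aᴴ * P * A * B := by rw [key]
    _ = Aᴴ * P * (A * B) := by rw [mul_assoc]
    _ = Aᴴ * P := by rw [hAB, mul_one]
  have hB : B = ⅟P * Aᴴ * P := by
    rw [mul_assoc, ← h1, ← mul_assoc, invOf_mul_self, one_mul]
  rw [hB, Matrix.trace_mul_cycle, mul_invOf_self, one_mul,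
    Matrix.trace_conjTranspose]
  rfl
lemma fdRep_conj_char {H : Type} [Group H] [Fintype H] (W : FDRep ℂ H) (t : H) :
    (starRingEnd ℂ) (W.character t) = W.character t⁻¹ := by
  classical
  let b := Module.Free.chooseBasis ℂ W
  have hco : ∀ u : H, LinearMap.toMatrix b b (W.ρ u) = LinearMap.toMatrixAlgEquiv b (W.ρ u) :=
    fun u => rfl
  have h1 : W.character t = (LinearMap.toMatrixAlgEquiv b (W.ρ t)).trace := by
    rw [← hco]; exact LinearMap.trace_eq_matrix_trace ℂ b (W.ρ t)
  have h2 : W.character t⁻¹ = (LinearMap.toMatrixAlgEquiv b (W.ρ t⁻¹)).trace := by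
    rw [← hco]; exact LinearMap.trace_eq_matrix_trace ℂ b (W.ρ t⁻¹)
  have hA : (LinearMap.toMatrixAlgEquiv b (W.ρ t)) ^ (Fintype.card H) = 1 := by
    rw [← map_pow, ← map_pow, pow_card_eq_one, map_one, map_one]
  have hAB : (LinearMap.toMatrixAlgEquiv b (W.ρ t)) * (LinearMap.toMatrixAlgEquiv b (W.ρ t⁻¹))
      = 1 := by
    rw [← map_mul, ← map_mul, mul_inv_cancel, map_one, map_one]
  rw [h1, h2]
  exact (matrix_conj_trace _ _ (Fintype.card H) Fintype.card_ne_zero hA hAB).symm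

lemma inner_prod_delta {H : Type} [Group H] [Fintype H] (U V' : FDRep ℂ H)
    [Simple U] [Simple V'] :
    (1 / (Fintype.card H : ℂ)) * ∑ t : H, U.character t * (starRingEnd ℂ) (V'.character t)
      = if Nonempty (U ≅ V') then 1 else 0 := by
  have hne : ((Fintype.card H : ℂ)) ≠ 0 := Nat.cast_ne_zero.mpr Fintype.card_ne_zero
  letI : Fintype ↑(GrpCat.of H) := ‹Fintype H›
  letI : Invertible ((Fintype.card ↑(GrpCat.of H) : ℂ)) := invertibleOfNonzero (by exact hne)
  have h := FDRep.char_orthonormal U V'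
  rw [Nat.card_eq_fintype_card] at h
  rw [one_div]
  calc ((Fintype.card H : ℂ))⁻¹ * ∑ t : H, U.character t * (starRingEnd ℂ) (V'.character t)
      = ((Fintype.card H : ℂ))⁻¹ * ∑ t : H, U.character t * V'.character t⁻¹ := by
        congr 1; exact Finset.sum_congr rfl fun t _ => by rw [fdRep_conj_char]
    _ = if Nonempty (U ≅ V') then 1 else 0 := by exact_mod_cast h
lemma sum_dite_mem {G : Type} [Group G] [Fintype G] (C : Subgroup G)
    (F : ∀ z : G, z ∈ C → ℂ) :
    ∑ z : G, (if h : z ∈ C then F z h else 0) = ∑ t : C, F t t.2 := by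
  classical
  rw [← Finset.sum_filter_add_sum_filter_not Finset.univ (fun z => z ∈ C)]
  rw [Finset.sum_eq_zero (fun z hz => dif_neg (Finset.mem_filter.mp hz).2), add_zero]
  rw [Finset.sum_subtype (p := fun z => z ∈ C) (Finset.univ.filter (fun z => z ∈ C)) (fun z => by simp)
    (fun z => if h : z ∈ C then F z h else 0)]
  exact Finset.sum_congr rfl fun t _ => dif_pos t.2

lemma class_card_mul {G : Type} [Group G] [Fintype G] (f : G) :
    Fintype.card {k : G // IsConj f k} *
      Fintype.card ↥(Subgroup.centralizer ({f} : Set G)) = Fintype.card G := by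
  classical
  have e1 : {k : G // IsConj f k} ≃ ↥(MulAction.orbit (ConjAct G) f) :=
    Equiv.subtypeEquivRight (fun k => by
      rw [ConjAct.mem_orbit_conjAct]; exact isConj_comm)
  have e2 : ↥(Subgroup.centralizer ({f} : Set G)) ≃ ↥(MulAction.stabilizer (ConjAct G) f) := by
    rw [Subgroup.centralizer_eq_comap_stabilizer f]
    exact Equiv.subtypeEquiv ConjAct.toConjAct.toEquiv (fun k => Iff.rfl)
  rw [Fintype.card_congr e1, Fintype.card_congr e2, ← ConjAct.card (G := G)]
  exact MulAction.card_orbit_mul_card_stabilizer_eq_card_group (ConjAct G) f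

/-- orthonormality of the induced class functions `χ̂_U, χ̂_V` attached to
irreducible representations `U` of `C_G(f)` and `V` of `C_G(g)`: their inner product
vanishes if `f` and `g` are not conjugate, and for `f = g` it equals the inner product
`⟨χ_U, χ_V⟩` over `C_G(f)`, which is `δ_{U,V}`. -/
theorem induced_characters_orthonormal
    (G : Type) [Group G] [Fintype G] (f g : G)
    (U : FDRep ℂ (↥(Subgroup.centralizer ({f} : Set G))))
    (V : FDRep ℂ (↥(Subgroup.centralizer ({g} : Set G))))
    (V' : FDRep ℂ (↥(Subgroup.centralizer ({f} : Set G))))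
    [Simple U] [Simple V] [Simple V']
    (w y : G → G)
    (hw : ∀ k : G, IsConj f k → k = w k * f * (w k)⁻¹)
    (hy : ∀ k : G, IsConj g k → k = y k * g * (y k)⁻¹) :
    (¬ IsConj f g →
      (1 / (Fintype.card G : ℂ)) * ∑ k : G, ∑ x : G,
        (if h : IsConj f k ∧ IsConj g k ∧
            (w k)⁻¹ * x * w k ∈ Subgroup.centralizer ({f} : Set G) ∧
            (y k)⁻¹ * x * y k ∈ Subgroup.centralizer ({g} : Set G) then
          U.character ⟨(w k)⁻¹ * x * w k, h.2.2.1⟩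
            * (starRingEnd ℂ) (V.character ⟨(y k)⁻¹ * x * y k, h.2.2.2⟩)
        else 0) = 0) ∧
    ((1 / (Fintype.card G : ℂ)) * ∑ k : G, ∑ x : G,
        (if h : IsConj f k ∧
            (w k)⁻¹ * x * w k ∈ Subgroup.centralizer ({f} : Set G) then
          U.character ⟨(w k)⁻¹ * x * w k, h.2⟩
            * (starRingEnd ℂ) (V'.character ⟨(w k)⁻¹ * x * w k, h.2⟩)
        else 0)
      = (1 / (Fintype.card (↥(Subgroup.centralizer ({f} : Set G))) : ℂ)) *
          ∑ t : ↥(Subgroup.centralizer ({f} : Set G)),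
            U.character t * (starRingEnd ℂ) (V'.character t)) ∧
    ((1 / (Fintype.card (↥(Subgroup.centralizer ({f} : Set G))) : ℂ)) *
        ∑ t : ↥(Subgroup.centralizer ({f} : Set G)),
          U.character t * (starRingEnd ℂ) (V'.character t)
      = if Nonempty (U ≅ V') then 1 else 0) := by
  classical
  refine ⟨?_, ?_, inner_prod_delta U V'⟩
  · intro hfg
    refine mul_eq_zero_of_right _ (Finset.sum_eq_zero fun k _ =>
      Finset.sum_eq_zero fun x _ => dif_neg ?_)
    rintro ⟨h1, h2, -⟩
    exact hfg (h1.trans h2.symm)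
  · set S := ∑ t : ↥(Subgroup.centralizer ({f} : Set G)), U.character t * (starRingEnd ℂ) (V'.character t) with hSdef
    have hinner : ∀ k : G, (∑ x : G,
        (if h : IsConj f k ∧ (w k)⁻¹ * x * w k ∈ Subgroup.centralizer ({f} : Set G) then
          U.character ⟨(w k)⁻¹ * x * w k, h.2⟩
            * (starRingEnd ℂ) (V'.character ⟨(w k)⁻¹ * x * w k, h.2⟩)
        else 0)) = if IsConj f k then S else 0 := by
      intro k
      by_cases hk : IsConj f k
      · rw [if_pos hk]
        have hg : ∀ x : G, (if h : IsConj f k ∧ (w k)⁻¹ * x * w k ∈ Subgroup.centralizer ({f} : Set G) then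
              U.character ⟨(w k)⁻¹ * x * w k, h.2⟩
                * (starRingEnd ℂ) (V'.character ⟨(w k)⁻¹ * x * w k, h.2⟩)
            else 0) =
            (if h : (w k)⁻¹ * x * w k ∈ Subgroup.centralizer ({f} : Set G) then
              U.character ⟨(w k)⁻¹ * x * w k, h⟩
                * (starRingEnd ℂ) (V'.character ⟨(w k)⁻¹ * x * w k, h⟩) else 0) := by
          intro x
          by_cases hm : (w k)⁻¹ * x * w k ∈ Subgroup.centralizer ({f} : Set G)
          · rw [dif_pos ⟨hk, hm⟩, dif_pos hm]
          · rw [dif_neg (fun hc => hm hc.2), dif_neg hm]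
        calc (∑ x : G,
            (if h : IsConj f k ∧ (w k)⁻¹ * x * w k ∈ Subgroup.centralizer ({f} : Set G) then
              U.character ⟨(w k)⁻¹ * x * w k, h.2⟩
                * (starRingEnd ℂ) (V'.character ⟨(w k)⁻¹ * x * w k, h.2⟩)
            else 0))
            = ∑ z : G, (if h : z ∈ Subgroup.centralizer ({f} : Set G) then
                U.character ⟨z, h⟩ * (starRingEnd ℂ) (V'.character ⟨z, h⟩) else 0) :=
              Fintype.sum_equiv ((Equiv.mulLeft (w k)⁻¹).trans (Equiv.mulRight (w k))) _ _
                (fun x => hg x)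
          _ = S := sum_dite_mem (Subgroup.centralizer ({f} : Set G)) _
      · rw [if_neg hk]
        exact Finset.sum_eq_zero fun x _ => dif_neg (fun hc => hk hc.1)
    rw [Finset.sum_congr rfl fun k _ => hinner k, ← Finset.sum_filter, Finset.sum_const]
    rw [← Fintype.card_subtype, nsmul_eq_mul]
    have hcc : ((Fintype.card {k : G // IsConj f k} : ℂ)) * (Fintype.card ↥(Subgroup.centralizer ({f} : Set G)) : ℂ)
        = (Fintype.card G : ℂ) := by exact_mod_cast class_card_mul f
    have hG0 : ((Fintype.card G : ℂ)) ≠ 0 := Nat.cast_ne_zero.mpr Fintype.card_ne_zero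
    have hC0 : ((Fintype.card ↥(Subgroup.centralizer ({f} : Set G)) : ℂ)) ≠ 0 := Nat.cast_ne_zero.mpr Fintype.card_ne_zero
    have hN0 : ((Fintype.card {k : G // IsConj f k} : ℂ)) ≠ 0 := by
      intro h; rw [h, zero_mul] at hcc; exact hG0 hcc.symm
    have generic : ∀ N c S : ℂ, N ≠ 0 → c ≠ 0 → 1 / (N * c) * (N * S) = 1 / c * S := by
      intro N c S hN hc
      field_simp
    rw [← hcc]
    exact generic _ _ _ hN0 hC0
end
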